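/- Under the instability hypotheses, the CAR-T population never falls below its initial value: if C, L, T : [t₀, ∞) → ℝ are differentiable, satisfy the system C' = ρ_C(T+L+C)C − C/τ_C − αC², L' = ρ_L L − αLC, T' = −αTC, have C(t₀) > 0, L(t₀) > 0, T(t₀) > 0, and if ρ_C > α and (ρ_C − α)·τ_C·(C(t₀)+L(t₀)+T(t₀)) > 1, then C(t) ≥ C(t₀) for all t ≥ t₀. -/

import Mathlib

open Set MeasureTheory intervalIntegral Real

lemma aux_ftc {t₀ : ℝ} {g : ℝ → ℝ} (hg : ∀ t ∈ Set.Ici t₀, ContinuousAt g t) :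
    (∀ t ∈ Set.Ici t₀, HasDerivWithinAt (fun x => ∫ s in t₀..x, g s) (g t) (Set.Ici t) t) ∧
    (∀ t ∈ Set.Ioi t₀, HasDerivAt (fun x => ∫ s in t₀..x, g s) (g t) t) := by
  have hgon : ContinuousOn g (Set.Ici t₀) := fun t ht => (hg t ht).continuousWithinAt
  have haesm : AEStronglyMeasurable g (volume.restrict (Set.Ici t₀)) :=
    hgon.aestronglyMeasurable measurableSet_Ici
  have hint : ∀ t, t₀ ≤ t → IntervalIntegrable g volume t₀ t := by
    intro t ht
    exact (hgon.mono (by rw [Set.uIcc_of_le ht]; exact Set.Icc_subset_Ici_self)).intervalIntegrable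
  constructor
  · intro t ht
    refine integral_hasDerivWithinAt_right (hint t ht)
      ⟨Set.Ici t₀, Filter.mem_of_superset self_mem_nhdsWithin
        ((Set.Ioi_subset_Ici_self).trans (Set.Ici_subset_Ici.2 ht)), haesm⟩
      ((hg t ht).continuousWithinAt)
  · intro t ht
    exact integral_hasDerivAt_right (hint t ht.le)
      ⟨Set.Ici t₀, Ici_mem_nhds ht, haesm⟩ (hg t (Set.mem_Ici.mpr (le_of_lt ht)))

lemma aux_pos {t₀ : ℝ} {X g : ℝ → ℝ}
    (hg : ∀ t ∈ Set.Ici t₀, ContinuousAt g t)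
    (hX : ∀ t ∈ Set.Ici t₀, HasDerivAt X (g t * X t) t)
    (hX0 : 0 < X t₀) : ∀ t ∈ Set.Ici t₀, 0 < X t := by
  obtain ⟨huw, hui⟩ := aux_ftc hg
  set u : ℝ → ℝ := fun x => ∫ s in t₀..x, g s with hu_def
  set P : ℝ → ℝ := fun x => X x * Real.exp (-(u x)) with hP_def
  -- continuity of u on Ici t₀
  have hucont : ContinuousOn u (Set.Ici t₀) := by
    intro t ht
    rcases eq_or_lt_of_le (Set.mem_Ici.mp ht) with h | h
    · subst h; exact (huw t₀ Set.self_mem_Ici).continuousWithinAt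
    · exact (hui t h).continuousAt.continuousWithinAt
  have hXcont : ContinuousOn X (Set.Ici t₀) := fun t ht =>
    (hX t ht).continuousAt.continuousWithinAt
  -- P is constant, equal to X t₀
  have hPconst : ∀ b ∈ Set.Ici t₀, P b = X t₀ := by
    intro b hb
    have key : ∀ x ∈ Set.Icc t₀ b, P x = P t₀ := by
      refine constant_of_has_deriv_right_zero
        (((hXcont.mono (Set.Icc_subset_Ici_self)).mul
          (((hucont.mono (Set.Icc_subset_Ici_self)).neg).rexp))) ?_
      intro x hx
      have hx' : x ∈ Set.Ici t₀ := hx.1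
      have h1 : HasDerivWithinAt X (g x * X x) (Set.Ici x) x :=
        (hX x hx').hasDerivWithinAt
      have h2 : HasDerivWithinAt (fun y => Real.exp (-(u y)))
          (Real.exp (-(u x)) * (-(g x))) (Set.Ici x) x :=
        ((huw x hx').neg).exp
      have : HasDerivWithinAt (fun y => X y * Real.exp (-(u y)))
          (g x * X x * Real.exp (-(u x)) + X x * (Real.exp (-(u x)) * (-(g x)))) (Set.Ici x) x :=
        h1.mul h2
      exact this.congr_deriv (by ring)
    have := key b ⟨hb, le_rfl⟩
    rw [this]
    simp [hP_def, hu_def, intervalIntegral.integral_same]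
  intro t ht
  have h1 : X t * Real.exp (-(u t)) = X t₀ := hPconst t ht
  have h2 : X t = X t₀ * Real.exp (u t) := by
    rw [← h1, Real.exp_neg]
    field_simp
  rw [h2]
  positivity


/-- Under the instability hypotheses `ρ_C > α` and
`(ρ_C − α)·τ_C·S(t₀) > 1`, the CAR-T population never falls below its initial
value: `C(t) ≥ C(t₀)` for all `t ≥ t₀`. -/
theorem carT_never_below_initial
    (ρC ρL α τC : ℝ) (hρC : 0 < ρC) (hρL : 0 < ρL) (hα : 0 < α) (hτC : 0 < τC)
    (t₀ : ℝ) (C L T : ℝ → ℝ)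
    (hC : ∀ t ∈ Set.Ici t₀,
      HasDerivAt C (ρC * (T t + L t + C t) * C t - C t / τC - α * (C t) ^ 2) t)
    (hL : ∀ t ∈ Set.Ici t₀, HasDerivAt L (ρL * L t - α * L t * C t) t)
    (hT : ∀ t ∈ Set.Ici t₀, HasDerivAt T (-(α * T t * C t)) t)
    (hC0 : 0 < C t₀) (hL0 : 0 < L t₀) (hT0 : 0 < T t₀)
    (hunstable1 : ρC > α)
    (hunstable2 : (ρC - α) * τC * (C t₀ + L t₀ + T t₀) > 1) :
    ∀ t ∈ Set.Ici t₀, C t₀ ≤ C t := by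
  have hk : 0 < ρC - α := sub_pos.2 hunstable1
  have hCc : ∀ t ∈ Set.Ici t₀, ContinuousAt C t := fun t ht => (hC t ht).continuousAt
  have hLc : ∀ t ∈ Set.Ici t₀, ContinuousAt L t := fun t ht => (hL t ht).continuousAt
  have hTc : ∀ t ∈ Set.Ici t₀, ContinuousAt T t := fun t ht => (hT t ht).continuousAt
  -- positivity of C, L, T
  have Cpos : ∀ t ∈ Set.Ici t₀, 0 < C t := by
    refine aux_pos (g := fun t => ρC * (T t + L t + C t) - 1/τC - α * C t) ?_ ?_ hC0
    · intro t ht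
      exact ((continuousAt_const.mul (((hTc t ht).add (hLc t ht)).add (hCc t ht))).sub
        continuousAt_const).sub (continuousAt_const.mul (hCc t ht))
    · intro t ht
      have h := hC t ht
      have e : ρC * (T t + L t + C t) * C t - C t / τC - α * (C t) ^ 2
          = (ρC * (T t + L t + C t) - 1/τC - α * C t) * C t := by ring
      rw [e] at h; exact h
  have Lpos : ∀ t ∈ Set.Ici t₀, 0 < L t := by
    refine aux_pos (g := fun t => ρL - α * C t) ?_ ?_ hL0
    · intro t ht
      exact continuousAt_const.sub (continuousAt_const.mul (hCc t ht))
    · intro t ht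
      have h := hL t ht
      have e : ρL * L t - α * L t * C t = (ρL - α * C t) * L t := by ring
      rw [e] at h; exact h
  have Tpos : ∀ t ∈ Set.Ici t₀, 0 < T t := by
    refine aux_pos (g := fun t => -(α * C t)) ?_ ?_ hT0
    · intro t ht
      exact (continuousAt_const.mul (hCc t ht)).neg
    · intro t ht
      have h := hT t ht
      have e : -(α * T t * C t) = -(α * C t) * T t := by ring
      rw [e] at h; exact h
  -- derivative of the total population S = T + L + C
  have hSd : ∀ t ∈ Set.Ici t₀, HasDerivAt (fun y => T y + L y + C y)
      (C t * ((ρC - α) * (T t + L t + C t) - 1/τC) + ρL * L t) t := by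
    intro t ht
    have h := ((hT t ht).add (hL t ht)).add (hC t ht)
    have e : -(α * T t * C t) + (ρL * L t - α * L t * C t)
        + (ρC * (T t + L t + C t) * C t - C t / τC - α * (C t) ^ 2)
        = C t * ((ρC - α) * (T t + L t + C t) - 1/τC) + ρL * L t := by ring
    rw [e] at h; exact h
  -- the integral of C
  obtain ⟨huw, hui⟩ := aux_ftc hCc
  set u : ℝ → ℝ := fun x => ∫ s in t₀..x, C s with hu_def
  have hucont : ContinuousOn u (Set.Ici t₀) := by
    intro t ht
    rcases eq_or_lt_of_le (Set.mem_Ici.mp ht) with h | h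
    · subst h; exact (huw t₀ Set.self_mem_Ici).continuousWithinAt
    · exact (hui t h).continuousAt.continuousWithinAt
  -- Q = W · exp(−(ρC−α)·u) is monotone, where W = (ρC−α)·S − 1/τC
  have hQcont : ContinuousOn
      (fun t => ((ρC - α) * (T t + L t + C t) - 1/τC) * Real.exp (-((ρC - α) * u t)))
      (Set.Ici t₀) := by
    refine ContinuousOn.mul ?_ ?_
    · have hTon : ContinuousOn T (Set.Ici t₀) := fun t ht => (hTc t ht).continuousWithinAt
      have hLon : ContinuousOn L (Set.Ici t₀) := fun t ht => (hLc t ht).continuousWithinAt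
      have hCon : ContinuousOn C (Set.Ici t₀) := fun t ht => (hCc t ht).continuousWithinAt
      exact (continuousOn_const.mul ((hTon.add hLon).add hCon)).sub continuousOn_const
    · exact ((continuousOn_const.mul hucont).neg).rexp
  have hQmono : MonotoneOn
      (fun t => ((ρC - α) * (T t + L t + C t) - 1/τC) * Real.exp (-((ρC - α) * u t)))
      (Set.Ici t₀) := by
    refine monotoneOn_of_hasDerivWithinAt_nonneg (convex_Ici t₀) hQcont
      (f' := fun x => (ρC - α) * ρL * L x * Real.exp (-((ρC - α) * u x))) ?_ ?_
    · intro x hx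
      rw [interior_Ici] at hx
      have hx' : x ∈ Set.Ici t₀ := Set.mem_Ici.mpr (le_of_lt hx)
      have h1 : HasDerivAt (fun y => (ρC - α) * (T y + L y + C y) - 1/τC)
          ((ρC - α) * (C x * ((ρC - α) * (T x + L x + C x) - 1/τC) + ρL * L x)) x :=
        ((hSd x hx').const_mul (ρC - α)).sub_const _
      have h2 : HasDerivAt (fun y => Real.exp (-((ρC - α) * u y)))
          (Real.exp (-((ρC - α) * u x)) * -((ρC - α) * C x)) x :=
        (((hui x hx).const_mul (ρC - α)).neg).exp
      have h3 := h1.mul h2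
      have e : (ρC - α) * (C x * ((ρC - α) * (T x + L x + C x) - 1/τC) + ρL * L x)
            * Real.exp (-((ρC - α) * u x))
          + ((ρC - α) * (T x + L x + C x) - 1/τC)
            * (Real.exp (-((ρC - α) * u x)) * -((ρC - α) * C x))
          = (ρC - α) * ρL * L x * Real.exp (-((ρC - α) * u x)) := by ring
      rw [e] at h3
      exact h3.hasDerivWithinAt
    · intro x hx
      rw [interior_Ici] at hx
      exact mul_nonneg (mul_nonneg (mul_nonneg hk.le hρL.le) (Lpos x (Set.mem_Ici.mpr (le_of_lt hx))).le)
        (Real.exp_nonneg _)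
  have hu0 : u t₀ = 0 := intervalIntegral.integral_same
  have hQ0 : (0:ℝ) < ((ρC - α) * (T t₀ + L t₀ + C t₀) - 1/τC) * Real.exp (-((ρC - α) * u t₀)) := by
    rw [hu0]
    have h1 : (0:ℝ) < (ρC - α) * (T t₀ + L t₀ + C t₀) - 1/τC := by
      rw [sub_pos, div_lt_iff₀ hτC]
      nlinarith
    simpa using h1
  -- W stays positive
  have Wpos : ∀ t ∈ Set.Ici t₀, 0 < (ρC - α) * (T t + L t + C t) - 1/τC := by
    intro t ht
    have h1 : ((ρC - α) * (T t₀ + L t₀ + C t₀) - 1/τC) * Real.exp (-((ρC - α) * u t₀))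
        ≤ ((ρC - α) * (T t + L t + C t) - 1/τC) * Real.exp (-((ρC - α) * u t)) :=
      hQmono Set.self_mem_Ici ht ht
    have h2 : (0:ℝ) < ((ρC - α) * (T t + L t + C t) - 1/τC) * Real.exp (-((ρC - α) * u t)) :=
      lt_of_lt_of_le hQ0 h1
    nlinarith [Real.exp_pos (-((ρC - α) * u t))]
  -- C is monotone
  have hCmono : MonotoneOn C (Set.Ici t₀) := by
    refine monotoneOn_of_hasDerivWithinAt_nonneg (convex_Ici t₀)
      (fun t ht => (hCc t ht).continuousWithinAt)
      (f' := fun x => ρC * (T x + L x + C x) * C x - C x / τC - α * (C x) ^ 2) ?_ ?_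
    · intro x hx
      rw [interior_Ici] at hx
      exact (hC x (Set.mem_Ici.mpr (le_of_lt hx))).hasDerivWithinAt
    · intro x hx
      rw [interior_Ici] at hx
      have hx' : x ∈ Set.Ici t₀ := Set.mem_Ici.mpr (le_of_lt hx)
      have hCp := Cpos x hx'
      have hLp := Lpos x hx'
      have hTp := Tpos x hx'
      have hWp := Wpos x hx'
      show (0:ℝ) ≤ ρC * (T x + L x + C x) * C x - C x / τC - α * (C x) ^ 2
      have key : ρC * (T x + L x + C x) * C x - C x / τC - α * (C x) ^ 2
          = C x * ((ρC - α) * (T x + L x + C x) - 1 / τC)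
            + α * (C x * (T x + L x)) := by ring
      rw [key]
      have h1 := mul_pos hCp hWp
      have h2 := mul_pos hα (mul_pos hCp (add_pos hTp hLp))
      linarith
  intro t ht
  exact hCmono Set.self_mem_Ici ht ht
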